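/- Let K be a field, F₀, F₁ homogeneous polynomials of degree d in two variables over K, and α, β, γ, δ ∈ K. Then Res(α·F₀ + β·F₁, γ·F₀ + δ·F₁) = (αδ - βγ)^d · Res(F₀, F₁). -/
import Mathlib


open Polynomial

/-- Dehomogenization `H(1, X)` of a binary form. -/
noncomputable def toUni {K : Type*} [CommRing K] (H : MvPolynomial (Fin 2) K) : Polynomial K :=
  MvPolynomial.aeval ![(1 : Polynomial K), Polynomial.X] H

/-- The Sylvester matrix of a pair of binary forms of degree `d`, given through
their dehomogenizations. -/
noncomputable def sylv {K : Type*} [CommRing K] (d : ℕ) (F G : Polynomial K) :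
    Matrix (Fin (d + d)) (Fin (d + d)) K := fun i j =>
  if (i : ℕ) < d then
    (if (i : ℕ) ≤ (j : ℕ) ∧ (j : ℕ) ≤ (i : ℕ) + d then
      F.coeff (d - ((j : ℕ) - (i : ℕ))) else 0)
  else
    (if (i : ℕ) - d ≤ (j : ℕ) ∧ (j : ℕ) ≤ ((i : ℕ) - d) + d then
      G.coeff (d - ((j : ℕ) - ((i : ℕ) - d))) else 0)

/-- The homogeneous resultant of a pair of degree-`d` binary forms. -/
noncomputable def res2 {K : Type*} [CommRing K] (d : ℕ) (H₀ H₁ : MvPolynomial (Fin 2) K) : K :=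
  (sylv d (toUni H₀) (toUni H₁)).det

/-- The degree of a rational function. -/
noncomputable def ratDeg {K : Type*} [Field K] (f : RatFunc K) : ℕ :=
  max f.num.natDegree f.denom.natDegree

/-- `H = (H₀,H₁)` is a (non-degenerate homogeneous polynomial) lift of degree `d`
of the rational function `f`: both components are homogeneous of degree `d`,
the homogeneous resultant is nonzero, and `H₁(1,z)/H₀(1,z) = f(z)`. -/
noncomputable def IsLift {K : Type*} [Field K] (d : ℕ) (f : RatFunc K)
    (H : Fin 2 → MvPolynomial (Fin 2) K) : Prop :=
  (H 0).IsHomogeneous d ∧ (H 1).IsHomogeneous d ∧ res2 d (H 0) (H 1) ≠ 0 ∧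
    f * algebraMap (Polynomial K) (RatFunc K) (toUni (H 0)) =
      algebraMap (Polynomial K) (RatFunc K) (toUni (H 1))

/-- The maximum of the absolute values of the coefficients of the pair `H`. -/
noncomputable def coeffSup {K : Type*} [Field K] (v : AbsoluteValue K ℝ)
    (H : Fin 2 → MvPolynomial (Fin 2) K) : ℝ :=
  sSup {r : ℝ | ∃ i : Fin 2, ∃ n : Fin 2 →₀ ℕ, r = v (MvPolynomial.coeff n (H i))}

/-- Substitution `H ∘ A`, i.e. `p ↦ H (A p)`. -/
noncomputable def polyComp {K : Type*} [CommRing K] (A : Matrix (Fin 2) (Fin 2) K)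
    (H : MvPolynomial (Fin 2) K) : MvPolynomial (Fin 2) K :=
  MvPolynomial.aeval (fun i => ∑ j, MvPolynomial.C (A i j) * MvPolynomial.X j) H

/-- The conjugated pair `A⁻¹ ∘ H ∘ A`. -/
noncomputable def pairConj {K : Type*} [Field K] (A : Matrix (Fin 2) (Fin 2) K)
    (H : Fin 2 → MvPolynomial (Fin 2) K) : Fin 2 → MvPolynomial (Fin 2) K :=
  fun i => ∑ j, MvPolynomial.C (A⁻¹ i j) * polyComp A (H j)

section Aux
open Matrix Kronecker

def blkEquiv (d : ℕ) : Fin (d + d) ≃ Fin 2 × Fin d where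
  toFun i := if h : (i : ℕ) < d then (0, ⟨i, h⟩)
    else (1, ⟨(i : ℕ) - d, by have := i.isLt; omega⟩)
  invFun p := ⟨(p.1 : ℕ) * d + (p.2 : ℕ), by
    have h1 : (p.1 : ℕ) * d ≤ 1 * d := Nat.mul_le_mul_right d (Nat.lt_succ_iff.mp p.1.isLt)
    have h2 := p.2.isLt; omega⟩
  left_inv i := by
    by_cases h : (i : ℕ) < d <;> simp only [h, dite_true, dite_false] <;>
      ext <;> simp
    omega
  right_inv p := by
    obtain ⟨k, j⟩ := p
    have hj := j.isLt
    fin_cases k <;> simp [hj, Prod.ext_iff, Fin.ext_iff] <;> omega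

lemma toUni_comb {K : Type*} [CommRing K] (F G : MvPolynomial (Fin 2) K) (a b : K) :
    toUni (MvPolynomial.C a * F + MvPolynomial.C b * G)
      = Polynomial.C a * toUni F + Polynomial.C b * toUni G := by
  simp [toUni, map_add, _root_.map_mul, MvPolynomial.aeval_C, Polynomial.algebraMap_eq]

lemma sylv_comb {K : Type*} [CommRing K] (d : ℕ) (f g : Polynomial K) (α β γ δ : K) :
    sylv d (Polynomial.C α * f + Polynomial.C β * g)
        (Polynomial.C γ * f + Polynomial.C δ * g)
      = ((!![α, β; γ, δ]) ⊗ₖ (1 : Matrix (Fin d) (Fin d) K)).submatrix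
          (blkEquiv d) (blkEquiv d) * sylv d f g := by
  ext i j
  rw [Matrix.mul_apply, ← Equiv.sum_comp (blkEquiv d).symm, Fintype.sum_prod_type]
  have key : ∀ p : Fin 2 × Fin d,
      (((!![α, β; γ, δ]) ⊗ₖ (1 : Matrix (Fin d) (Fin d) K)).submatrix
        (blkEquiv d) (blkEquiv d)) i ((blkEquiv d).symm p)
      = (!![α, β; γ, δ]) ((blkEquiv d) i).1 p.1
          * (if ((blkEquiv d) i).2 = p.2 then 1 else 0) := by
    intro p
    simp [Matrix.submatrix_apply, Matrix.one_apply, kroneckerMap_apply]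
  simp only [key, mul_ite, mul_one, mul_zero, ite_mul, zero_mul,
    Finset.sum_ite_eq, Finset.mem_univ, if_true]
  rw [Fin.sum_univ_two]
  by_cases h : (i : ℕ) < d
  · have hni : ¬ (d + (i : ℕ) < d) := by omega
    simp only [sylv, blkEquiv, h, dite_true, Equiv.coe_fn_mk, Equiv.coe_fn_symm_mk,
      Fin.val_zero, Fin.val_one, zero_mul, one_mul, zero_add, Fin.isValue, Fin.val_mk,
      Matrix.cons_val', Matrix.cons_val_zero, Matrix.cons_val_one, Matrix.head_cons,
      Matrix.empty_val', Matrix.cons_val_fin_one, Matrix.head_fin_const,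
      Polynomial.coeff_add, Polynomial.coeff_C_mul, hni, if_true, if_false]
    have e1 : d + (i : ℕ) - d = (i : ℕ) := by omega
    rw [e1]
    split_ifs <;> simp <;> ring
  · have hi := i.isLt
    have hlt : (i : ℕ) - d < d := by omega
    have hni : ¬ (d + ((i : ℕ) - d) < d) := by omega
    simp only [sylv, blkEquiv, h, dite_false, Equiv.coe_fn_mk, Equiv.coe_fn_symm_mk,
      Fin.val_zero, Fin.val_one, zero_mul, one_mul, zero_add, Fin.isValue, Fin.val_mk,
      Matrix.cons_val', Matrix.cons_val_zero, Matrix.cons_val_one, Matrix.head_cons,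
      Matrix.empty_val', Matrix.cons_val_fin_one, Matrix.head_fin_const,
      Polynomial.coeff_add, Polynomial.coeff_C_mul, hlt, hni, if_true, if_false]
    have e1 : d + ((i : ℕ) - d) - d = (i : ℕ) - d := by omega
    rw [e1]
    split_ifs <;> simp <;> ring

end Aux

/-- For degree-`d` binary forms `F₀, F₁` over a field `K` and `α, β, γ, δ ∈ K`:
`Res(α·F₀ + β·F₁, γ·F₀ + δ·F₁) = (αδ - βγ)^d · Res(F₀,F₁)`. -/
theorem stmt_11 {K : Type*} [Field K] (d : ℕ) (F₀ F₁ : MvPolynomial (Fin 2) K)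
    (h₀ : F₀.IsHomogeneous d) (h₁ : F₁.IsHomogeneous d) (α β γ δ : K) :
    res2 d (MvPolynomial.C α * F₀ + MvPolynomial.C β * F₁)
        (MvPolynomial.C γ * F₀ + MvPolynomial.C δ * F₁) =
      (α * δ - β * γ) ^ d * res2 d F₀ F₁ := by
  unfold res2
  rw [toUni_comb, toUni_comb, sylv_comb, Matrix.det_mul,
    Matrix.det_submatrix_equiv_self, Matrix.det_kronecker, Matrix.det_one, one_pow,
    Matrix.det_fin_two_of, Fintype.card_fin, mul_one]
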